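/- The function r(X) = log_{|F|} |C_X| defined on subsets X of {1,...,n}, where C is an almost affine code and C_X is the projection (puncturing) of C to coordinates X, is the rank function of a matroid on {1,...,n}. -/

import Mathlib

/-- The projection (puncturing) of a block code `C ⊆ F^n` to the coordinate set `X`. -/
def projC {F : Type*} [DecidableEq F] {n : ℕ} (C : Finset (Fin n → F)) (X : Finset (Fin n)) :
    Finset ({ i // i ∈ X } → F) :=
  C.image (fun c i => c i.1)

/-- `C ⊆ F^n` is an almost affine code of length `n` and dimension `k`:
`|C| = |F|^k` and every projection has cardinality a power of `|F|`. -/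
def IsAlmostAffineCode {F : Type*} [Fintype F] [DecidableEq F] (n k : ℕ)
    (C : Finset (Fin n → F)) : Prop :=
  C.card = Fintype.card F ^ k ∧
    ∀ X : Finset (Fin n), ∃ s : ℕ, (projC C X).card = Fintype.card F ^ s

/-- The `ct`-support of a word `c`. -/
def suppW {F : Type*} [DecidableEq F] {n : ℕ} (c ct : Fin n → F) : Finset (Fin n) :=
  Finset.univ.filter (fun i => c i ≠ ct i)

/-- `C(X, ct)`: the codewords of `C` agreeing with `ct` on `X`. -/
def agreeOn {F : Type*} [DecidableEq F] {n : ℕ} (C : Finset (Fin n → F))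
    (X : Finset (Fin n)) (ct : Fin n → F) : Finset (Fin n → F) :=
  C.filter (fun w => ∀ i ∈ X, w i = ct i)

/-- The `ct`-support of a code `D`. -/
def suppCode {F : Type*} [DecidableEq F] {n : ℕ} (D : Finset (Fin n → F)) (ct : Fin n → F) :
    Finset (Fin n) :=
  D.biUnion (fun w => suppW w ct)

section Aux

variable {F : Type*} [DecidableEq F] {n : ℕ}

/-- Restriction of a word on `Y` to a subset `X`. -/
def restrAA {X Y : Finset (Fin n)} (h : X ⊆ Y) (f : {i // i ∈ Y} → F) : {i // i ∈ X} → F :=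
  fun i => f ⟨i.1, h i.2⟩

lemma projC_eq_image {C : Finset (Fin n → F)} {X Y : Finset (Fin n)} (h : X ⊆ Y) :
    projC C X = (projC C Y).image (restrAA h) := by
  unfold projC restrAA
  rw [Finset.image_image]
  rfl

lemma projC_card_mono (C : Finset (Fin n → F)) {X Y : Finset (Fin n)} (h : X ⊆ Y) :
    (projC C X).card ≤ (projC C Y).card := by
  rw [projC_eq_image h]; exact Finset.card_image_le

lemma projC_card_insert_le [Fintype F] (C : Finset (Fin n → F)) (X : Finset (Fin n))
    (x : Fin n) :
    (projC C (insert x X)).card ≤ (projC C X).card * Fintype.card F := by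
  classical
  set hsub : X ⊆ insert x X := Finset.subset_insert x X
  have hx : x ∈ insert x X := Finset.mem_insert_self x X
  set φ : ({i // i ∈ insert x X} → F) → ({i // i ∈ X} → F) × F :=
    fun f => (restrAA hsub f, f ⟨x, hx⟩) with hφ
  have hmaps : ∀ f ∈ projC C (insert x X), φ f ∈ (projC C X) ×ˢ Finset.univ := by
    intro f hf
    refine Finset.mem_product.2 ⟨?_, Finset.mem_univ _⟩
    rw [projC_eq_image hsub]
    exact Finset.mem_image_of_mem _ hf
  have hinj : Set.InjOn φ (projC C (insert x X)) := by
    intro f _ g _ hfg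
    have h1 : restrAA (F := F) hsub f = restrAA hsub g := congrArg Prod.fst hfg
    have h2 : f ⟨x, hx⟩ = g ⟨x, hx⟩ := congrArg Prod.snd hfg
    funext i
    rcases Finset.mem_insert.mp i.2 with hi | hi
    · have : i = ⟨x, hx⟩ := Subtype.ext hi
      rw [this]; exact h2
    · have := congrFun h1 ⟨i.1, hi⟩
      simpa [restrAA] using this
  calc (projC C (insert x X)).card ≤ ((projC C X) ×ˢ (Finset.univ : Finset F)).card :=
        Finset.card_le_card_of_injOn φ hmaps hinj
    _ = (projC C X).card * Fintype.card F := by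
        rw [Finset.card_product, Finset.card_univ]

/-- If the projection to `insert x X` is no bigger than to `X`, then values on `X`
determine the value at `x`. -/
lemma projC_det {C : Finset (Fin n → F)} {X : Finset (Fin n)} {x : Fin n}
    (hcard : (projC C (insert x X)).card ≤ (projC C X).card)
    {c d : Fin n → F} (hc : c ∈ C) (hd : d ∈ C) (hagree : ∀ i ∈ X, c i = d i) :
    c x = d x := by
  classical
  set hsub : X ⊆ insert x X := Finset.subset_insert x X
  have hx : x ∈ insert x X := Finset.mem_insert_self x X
  have hcardeq : ((projC C (insert x X)).image (restrAA (F := F) hsub)).card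
      = (projC C (insert x X)).card := by
    rw [← projC_eq_image hsub]
    exact le_antisymm (projC_card_mono C (Finset.subset_insert x X)) hcard
  have hinj : Set.InjOn (restrAA (F := F) hsub) (projC C (insert x X)) :=
    Finset.injOn_of_card_image_eq hcardeq
  set u : {i // i ∈ insert x X} → F := fun i => c i.1 with hu
  set v : {i // i ∈ insert x X} → F := fun i => d i.1 with hv
  have humem : u ∈ projC C (insert x X) := Finset.mem_image_of_mem _ hc
  have hvmem : v ∈ projC C (insert x X) := Finset.mem_image_of_mem _ hd
  have hres : restrAA (F := F) hsub u = restrAA hsub v := by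
    funext i; exact hagree i.1 i.2
  have huv : u = v := hinj humem hvmem hres
  exact congrFun huv ⟨x, hx⟩

end Aux

/-- the function `r(X) = log_{|F|} |C_X|` associated to an almost affine
code `C` is the rank function of a matroid on `{1,…,n}`: it satisfies (R1), (R2), (R3). -/
theorem rank_of_almost_affine_is_matroid_rank
    {F : Type*} [Fintype F] [DecidableEq F] (hF : 1 < Fintype.card F)
    {n k : ℕ} (C : Finset (Fin n → F)) (hC : IsAlmostAffineCode n k C)
    (r : Finset (Fin n) → ℕ)
    (hr : ∀ X : Finset (Fin n), (projC C X).card = Fintype.card F ^ r X) :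
    r ∅ = 0 ∧
    (∀ (X : Finset (Fin n)) (x : Fin n),
      r X ≤ r (insert x X) ∧ r (insert x X) ≤ r X + 1) ∧
    (∀ (X : Finset (Fin n)) (x y : Fin n),
      r (insert x X) = r X → r (insert y X) = r X →
      r (insert y (insert x X)) = r X) := by
  classical
  have hq2 : 2 ≤ Fintype.card F := hF
  have hpowinj : Function.Injective (Fintype.card F ^ ·) := Nat.pow_right_injective hq2
  have hCne : C.Nonempty := by
    rw [← Finset.card_pos, hC.1]
    exact Nat.pow_pos (n := k) (Nat.lt_of_lt_of_le Nat.zero_lt_one hF.le)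
  refine ⟨?_, ?_, ?_⟩
  · -- (R1)
    have hE : IsEmpty {i // i ∈ (∅ : Finset (Fin n))} :=
      ⟨fun i => absurd i.2 (Finset.notMem_empty i.1)⟩
    have hle1 : (projC C (∅ : Finset (Fin n))).card ≤ 1 := by
      refine Finset.card_le_one.2 (fun a _ b _ => ?_)
      funext i; exact hE.elim i
    have hge1 : 1 ≤ (projC C (∅ : Finset (Fin n))).card :=
      Finset.card_pos.mpr (hCne.image _)
    have h1 : Fintype.card F ^ r ∅ = Fintype.card F ^ 0 := by
      rw [← hr ∅, pow_zero]; exact le_antisymm hle1 hge1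
    exact hpowinj h1
  · -- (R2)
    intro X x
    constructor
    · have hmono := projC_card_mono C (Finset.subset_insert x X)
      rw [hr X, hr (insert x X)] at hmono
      exact (Nat.pow_le_pow_iff_right hF).mp hmono
    · have hle := projC_card_insert_le C X x
      rw [hr X, hr (insert x X), ← pow_succ] at hle
      exact (Nat.pow_le_pow_iff_right hF).mp hle
  · -- (R3)
    intro X x y hx hy
    have hle : ∀ z : Fin n, r (insert z X) = r X →
        (projC C (insert z X)).card ≤ (projC C X).card := by
      intro z hz
      rw [hr (insert z X), hr X, hz]
    have hdx := hle x hx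
    have hdy := hle y hy
    set Z : Finset (Fin n) := insert y (insert x X) with hZ
    have hXZ : X ⊆ Z := (Finset.subset_insert x X).trans (Finset.subset_insert y _)
    have hcardle : (projC C Z).card ≤ (projC C X).card := by
      have hmaps : ∀ f ∈ projC C Z, restrAA (F := F) hXZ f ∈ projC C X := by
        intro f hf
        rw [projC_eq_image hXZ]
        exact Finset.mem_image_of_mem _ hf
      have hinj : Set.InjOn (restrAA (F := F) hXZ) (projC C Z) := by
        intro u hu v hv huv
        rcases Finset.mem_image.mp hu with ⟨c, hc, hcu⟩
        rcases Finset.mem_image.mp hv with ⟨d, hd, hdv⟩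
        have hagree : ∀ i ∈ X, c i = d i := by
          intro i hi
          have := congrFun huv ⟨i, hi⟩
          simp only [restrAA, ← hcu, ← hdv] at this
          exact this
        have hcdx : c x = d x := projC_det hdx hc hd hagree
        have hcdy : c y = d y := projC_det hdy hc hd hagree
        rw [← hcu, ← hdv]
        funext i
        rcases Finset.mem_insert.mp i.2 with hi | hi
        · simpa [hi] using hcdy
        · rcases Finset.mem_insert.mp hi with hi' | hi'
          · simpa [hi'] using hcdx
          · exact hagree i.1 hi'
      exact Finset.card_le_card_of_injOn _ hmaps hinj
    have hcardeq : (projC C Z).card = (projC C X).card :=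
      le_antisymm hcardle (projC_card_mono C hXZ)
    have : Fintype.card F ^ r Z = Fintype.card F ^ r X := by
      rw [← hr Z, ← hr X, hcardeq]
    exact hpowinj this
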